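/- Let f ∈ ℝ[x₁,…,xₙ], let u ∈ ℝⁿ be an H-minimizer of f (∇f(u) = 0 and ∇²f(u) positive semidefinite), and suppose η ∈ ℝ satisfies f − η = φ + σ where φ ∈ ⟨∇f⟩ (the ideal generated by ∂f/∂x₁,…,∂f/∂xₙ) and σ ∈ Q(∇²f). Then η ≤ f(u). Consequently, if f − η ∈ ⟨∇f⟩ + Q(∇²f) then η is at most the smallest H-minimum of f. -/

import Mathlib

open MvPolynomial

noncomputable section

/-- The gradient of `f` vanishes at `x`. -/
def gradZero {n : ℕ} (f : MvPolynomial (Fin n) ℝ) (x : Fin n → ℝ) : Prop :=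
  ∀ i, eval x (pderiv i f) = 0

/-- The Hessian of `f` evaluated at `x`. -/
def hessAt {n : ℕ} (f : MvPolynomial (Fin n) ℝ) (x : Fin n → ℝ) :
    Matrix (Fin n) (Fin n) ℝ :=
  fun i j => eval x (pderiv i (pderiv j f))

/-- `u` is an H-minimizer of `f`: `∇f(u) = 0` and `∇²f(u) ⪰ 0`. -/
def IsHMinimizer {n : ℕ} (f : MvPolynomial (Fin n) ℝ) (u : Fin n → ℝ) : Prop :=
  gradZero f u ∧ (hessAt f u).PosSemidef

/-- `p` is a sum of squares of polynomials. -/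
def IsSOS {n : ℕ} (p : MvPolynomial (Fin n) ℝ) : Prop :=
  ∃ (r : ℕ) (q : Fin r → MvPolynomial (Fin n) ℝ), p = ∑ j, q j ^ 2

/-- The gradient ideal `⟨∇f⟩ = {Σᵢ (∂f/∂xᵢ) pᵢ : pᵢ ∈ ℝ[x]}`. -/
def gradIdeal {n : ℕ} (f : MvPolynomial (Fin n) ℝ) : Set (MvPolynomial (Fin n) ℝ) :=
  {p | ∃ c : Fin n → MvPolynomial (Fin n) ℝ, p = ∑ i, pderiv i f * c i}

/-- The Hessian of `f` as a symmetric matrix polynomial. -/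
def hessPoly {n : ℕ} (f : MvPolynomial (Fin n) ℝ) :
    Matrix (Fin n) (Fin n) (MvPolynomial (Fin n) ℝ) :=
  fun i j => pderiv i (pderiv j f)

/-- The quadratic module `Q(H) = Σ[x] + {Trace(H W) : W = Σ_j a_j a_jᵀ}` of a
symmetric matrix polynomial `H`. -/
def QMat {n ℓ : ℕ} (H : Matrix (Fin ℓ) (Fin ℓ) (MvPolynomial (Fin n) ℝ)) :
    Set (MvPolynomial (Fin n) ℝ) :=
  {p | ∃ σ : MvPolynomial (Fin n) ℝ, IsSOS σ ∧
    ∃ (r : ℕ) (a : Fin r → Fin ℓ → MvPolynomial (Fin n) ℝ),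
      p = σ + ∑ i, ∑ l, H i l * ∑ j, a j i * a j l}


private lemma key_stmt2 {n : ℕ} (f : MvPolynomial (Fin n) ℝ) (w : Fin n → ℝ)
    (hw : (∀ i, eval w (pderiv i f) = 0) ∧
      (Matrix.PosSemidef (fun i j => eval w (pderiv i (pderiv j f)) : Matrix (Fin n) (Fin n) ℝ)))
    (η : ℝ) (c : Fin n → MvPolynomial (Fin n) ℝ)
    (r0 : ℕ) (q : Fin r0 → MvPolynomial (Fin n) ℝ)
    (r : ℕ) (a : Fin r → Fin n → MvPolynomial (Fin n) ℝ)
    (heq : f - C η = (∑ i, pderiv i f * c i) +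
      ((∑ j, q j ^ 2) + ∑ i, ∑ l, pderiv i (pderiv l f) * ∑ j, a j i * a j l)) :
    η ≤ eval w f := by
  have h := congrArg (eval w) heq
  simp only [map_sub, eval_C, map_add, map_sum, map_mul, map_pow, hw.1, zero_mul,
    Finset.sum_const_zero, zero_add] at h
  set M : Matrix (Fin n) (Fin n) ℝ := fun i j => eval w (pderiv i (pderiv j f)) with hM
  set v : Fin r → Fin n → ℝ := fun j i => eval w (a j i) with hv
  have htr : (∑ i, ∑ l, eval w (pderiv i (pderiv l f)) * ∑ j, eval w (a j i) * eval w (a j l))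
      = ∑ j, dotProduct (v j) (M.mulVec (v j)) := by
    have e1 : ∀ i l : Fin n, M i l * ∑ j, v j i * v j l = ∑ j, v j i * (M i l * v j l) :=
      fun i l => by rw [Finset.mul_sum]; exact Finset.sum_congr rfl fun j _ => by ring
    calc (∑ i, ∑ l, M i l * ∑ j, v j i * v j l)
        = ∑ i, ∑ l, ∑ j, v j i * (M i l * v j l) := by
          exact Finset.sum_congr rfl fun i _ => Finset.sum_congr rfl fun l _ => e1 i l
      _ = ∑ i, ∑ j, ∑ l, v j i * (M i l * v j l) :=
          Finset.sum_congr rfl fun i _ => Finset.sum_comm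
      _ = ∑ j, ∑ i, ∑ l, v j i * (M i l * v j l) := Finset.sum_comm
      _ = ∑ j, dotProduct (v j) (M.mulVec (v j)) := by
          simp [dotProduct, Matrix.mulVec, Finset.mul_sum]
  rw [htr] at h
  have h1 : 0 ≤ ∑ j, eval w (q j) ^ 2 := Finset.sum_nonneg fun j _ => sq_nonneg _
  have h2 : 0 ≤ ∑ j, dotProduct (v j) (M.mulVec (v j)) :=
    Finset.sum_nonneg fun j _ => by have := hw.2.dotProduct_mulVec_nonneg (v j); simpa using this
  linarith

/-- If `u` is an H-minimizer of `f` and `f - η = φ + σ` with `φ ∈ ⟨∇f⟩` and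
`σ ∈ Q(∇²f)`, then `η ≤ f(u)`; consequently `η` is at most the smallest H-minimum. -/
theorem stmt2 {n : ℕ} (f : MvPolynomial (Fin n) ℝ) (u : Fin n → ℝ)
    (hu : IsHMinimizer f u) (η : ℝ) (φ σ : MvPolynomial (Fin n) ℝ)
    (hφ : φ ∈ gradIdeal f) (hσ : σ ∈ QMat (hessPoly f))
    (heq : f - C η = φ + σ) :
    η ≤ eval u f ∧
      ∀ f₁ : ℝ, IsLeast {v : ℝ | ∃ w : Fin n → ℝ, IsHMinimizer f w ∧ eval w f = v} f₁ →
        η ≤ f₁ := by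
  
  obtain ⟨c, rfl⟩ := hφ
  obtain ⟨s, ⟨r0, q, rfl⟩, r, a, rfl⟩ := hσ
  have hmain : ∀ w : Fin n → ℝ, IsHMinimizer f w → η ≤ eval w f := fun w hw =>
    key_stmt2 f w hw η c r0 q r a heq
  refine ⟨hmain u hu, ?_⟩
  rintro f₁ ⟨⟨w, hwmin, rfl⟩, -⟩
  exact hmain w hwmin
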